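/- (Young's characterization) Let (P^ε)_{ε≥0} be a regular perturbed Markov process on a finite set Ω. A state z ∈ Ω is stochastically stable if and only if there exists a tree rooted at z whose resistance is minimal among the resistances of all rooted trees (over all possible roots). -/
import Mathlib


open Classical Filter Finset

set_option linter.unusedSectionVars false
set_option linter.unusedVariables false
set_option maxHeartbeats 1000000

noncomputable section

namespace Young

variable {Ω : Type*} [Fintype Ω] [DecidableEq Ω]

/-- `pathOK T a z l` : `l` is the list of successive vertices of a directed path
from `a` to `z` using transitions from `T`. -/
def pathOK (T : Set (Ω × Ω)) (a z : Ω) : List Ω → Prop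
  | [] => a = z
  | b :: l => (a, b) ∈ T ∧ pathOK T b z l

/-- A transition is non-forbidden if it has positive probability for some
(equivalently, by regularity, for all) `ε > 0`. -/
def Allowed (P : ℝ → Matrix Ω Ω ℝ) (x y : Ω) : Prop := ∃ ε > (0 : ℝ), 0 < P ε x y

/-- `T` is a tree of non-forbidden transitions rooted at `z` : for every state
`w ≠ z` there is a unique directed path in `T` from `w` to `z`. -/
def IsRootedTree (P : ℝ → Matrix Ω Ω ℝ) (T : Finset (Ω × Ω)) (z : Ω) : Prop :=
  (∀ p ∈ T, Allowed P p.1 p.2) ∧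
  (∀ w : Ω, w ≠ z → ∃! l : List Ω, pathOK (↑T : Set (Ω × Ω)) w z l)

/-- The resistance of a set of transitions: the sum of the resistances of its edges. -/
def treeRes (res : Ω → Ω → ℝ) (T : Finset (Ω × Ω)) : ℝ := ∑ p ∈ T, res p.1 p.2

/-- `f` is a functional arborescence rooted at `z`. -/
def IsArbo (f : Ω → Ω) (z : Ω) : Prop := f z = z ∧ ∀ v, ∃ n, f^[n] v = z

/-- every vertex reaches `z` in a positive number of steps. -/
def IsCyc (g : Ω → Ω) (z : Ω) : Prop := ∀ v, ∃ n, 0 < n ∧ g^[n] v = z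

lemma iter_agree {f g : Ω → Ω} {x : Ω} (hfg : ∀ y, y ≠ x → f y = g y) :
    ∀ (k : ℕ) (v : Ω), (∀ j, j < k → g^[j] v ≠ x) → f^[k] v = g^[k] v := by
  intro k
  induction k with
  | zero => intro v _; simp
  | succ k ih =>
    intro v hv
    rw [Function.iterate_succ_apply', Function.iterate_succ_apply',
      ih v (fun j hj => hv j (Nat.lt_succ_of_lt hj))]
    exact hfg _ (hv k (Nat.lt_succ_self k))

/-- cycle-predecessor of `z` in `g`. -/
def cpred (g : Ω → Ω) (z : Ω) : Ω :=
  if h : ∃ n, 0 < n ∧ g^[n] z = z then g^[Nat.find h - 1] z else z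

lemma cpred_spec {g : Ω → Ω} {z : Ω} (h : ∃ n, 0 < n ∧ g^[n] z = z) :
    g (cpred g z) = z := by
  rw [cpred, dif_pos h]
  calc g (g^[Nat.find h - 1] z) = g^[Nat.find h - 1 + 1] z :=
        (Function.iterate_succ_apply' g _ z).symm
    _ = z := by rw [Nat.sub_add_cancel (Nat.find_spec h).1]; exact (Nat.find_spec h).2

lemma g_cpred {g : Ω → Ω} {z : Ω} (hg : IsCyc g z) : g (cpred g z) = z :=
  cpred_spec (hg z)

lemma arbo_to_cyc {f : Ω → Ω} {x z : Ω} (hf : IsArbo f x) :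
    IsCyc (Function.update f x z) z := by
  intro v
  have hx : ∃ n, f^[n] v = x := hf.2 v
  set n := Nat.find hx with hn
  have h1 : (Function.update f x z)^[n] v = x := by
    rw [iter_agree (g := f) (x := x) (fun y hy => Function.update_of_ne hy z f) n v
      (fun j hj => Nat.find_min hx hj)]
    exact Nat.find_spec hx
  refine ⟨n + 1, Nat.succ_pos n, ?_⟩
  rw [Function.iterate_succ_apply', h1, Function.update_self]

lemma cpred_update {f : Ω → Ω} {x z : Ω} (hf : IsArbo f x) :
    cpred (Function.update f x z) z = x := by
  set g := Function.update f x z with hgdef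
  have hagree : ∀ y, y ≠ x → g y = f y := fun y hy => Function.update_of_ne hy z f
  have hx : ∃ n, f^[n] z = x := hf.2 z
  set n := Nat.find hx with hn
  have hgn : g^[n] z = x := by
    rw [iter_agree hagree n z (fun j hj => Nat.find_min hx hj)]
    exact Nat.find_spec hx
  have hgn1 : g^[n + 1] z = z := by
    rw [Function.iterate_succ_apply', hgn]
    exact Function.update_self x z f
  have h : ∃ m, 0 < m ∧ g^[m] z = z := ⟨n + 1, Nat.succ_pos n, hgn1⟩
  have hle : Nat.find h ≤ n + 1 := Nat.find_le ⟨Nat.succ_pos n, hgn1⟩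
  have hge : ¬ (Nat.find h ≤ n) := by
    intro hm
    have hms := Nat.find_spec h
    have hfm : f^[Nat.find h] z = z := by
      have hag := iter_agree (f := g) (g := f) hagree (Nat.find h) z
        (fun j hj => Nat.find_min hx (lt_of_lt_of_le hj hm))
      rw [← hag]; exact hms.2
    have hthis : f^[n] z = x := Nat.find_spec hx
    have : f^[n - Nat.find h] z = x := by
      rwa [← Nat.sub_add_cancel hm, Function.iterate_add_apply, hfm] at hthis
    exact Nat.find_min hx (Nat.sub_lt_of_pos_le hms.1 hm) this
  have hm : Nat.find h = n + 1 := le_antisymm hle (Nat.lt_of_not_le hge)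
  rw [cpred, dif_pos h, hm, Nat.add_sub_cancel, hgn]

lemma cyc_reaches_cpred {g : Ω → Ω} {z : Ω} (hg : IsCyc g z) (v : Ω) :
    ∃ n, g^[n] v = cpred g z := by
  obtain ⟨n₀, _, hn₀⟩ := hg v
  have h : ∃ n, 0 < n ∧ g^[n] z = z := hg z
  refine ⟨(Nat.find h - 1) + n₀, ?_⟩
  rw [Function.iterate_add_apply, hn₀, cpred, dif_pos h]

lemma arbo_of_cyc {g : Ω → Ω} {z : Ω} (hg : IsCyc g z) :
    IsArbo (Function.update g (cpred g z) (cpred g z)) (cpred g z) := by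
  set x := cpred g z
  refine ⟨Function.update_self x x g, fun v => ?_⟩
  have hx : ∃ n, g^[n] v = x := cyc_reaches_cpred hg v
  refine ⟨Nat.find hx, ?_⟩
  rw [iter_agree (g := g) (fun y hy => Function.update_of_ne hy x g) (Nat.find hx) v
    (fun j hj => Nat.find_min hx hj)]
  exact Nat.find_spec hx

lemma update_back {f : Ω → Ω} {x z : Ω} (hfx : f x = x) :
    Function.update (Function.update f x z) x x = f := by
  funext v
  rcases eq_or_ne v x with rfl | hv
  · simp [hfx]
  · simp [Function.update_of_ne hv]

lemma update_forward {g : Ω → Ω} {x z : Ω} (hgx : g x = z) :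
    Function.update (Function.update g x x) x z = g := by
  funext v
  rcases eq_or_ne v x with rfl | hv
  · simp [hgx]
  · simp [Function.update_of_ne hv]

lemma cyc_of_update_root {f : Ω → Ω} {z y : Ω} (hf : IsArbo f z) :
    IsCyc (Function.update f z y) z := by
  set g := Function.update f z y with hgdef
  have hagree : ∀ w, w ≠ z → g w = f w := fun w hw => Function.update_of_ne hw y f
  intro v
  have hv : ∃ n, f^[n] v = z := hf.2 v
  rcases Nat.eq_zero_or_pos (Nat.find hv) with h0 | hpos
  · -- v = z
    have hvz : v = z := by have := Nat.find_spec hv; rwa [h0] at this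
    have hy : ∃ n, f^[n] y = z := hf.2 y
    have hgy : g^[Nat.find hy] y = z := by
      rw [iter_agree hagree (Nat.find hy) y (fun j hj => Nat.find_min hy hj)]
      exact Nat.find_spec hy
    refine ⟨Nat.find hy + 1, Nat.succ_pos _, ?_⟩
    rw [hvz, Function.iterate_succ_apply]
    have : g z = y := Function.update_self z y f
    rw [this, hgy]
  · refine ⟨Nat.find hv, hpos, ?_⟩
    rw [iter_agree hagree (Nat.find hv) v (fun j hj => Nat.find_min hv hj)]
    exact Nat.find_spec hv

lemma arbo_of_cyc_root {g : Ω → Ω} {z : Ω} (hg : IsCyc g z) :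
    IsArbo (Function.update g z z) z := by
  refine ⟨Function.update_self z z g, fun v => ?_⟩
  obtain ⟨n, _, hn⟩ := hg v
  have hx : ∃ n, g^[n] v = z := ⟨n, hn⟩
  refine ⟨Nat.find hx, ?_⟩
  rw [iter_agree (g := g) (fun y hy => Function.update_of_ne hy z g) (Nat.find hx) v
    (fun j hj => Nat.find_min hx hj)]
  exact Nat.find_spec hx

lemma prod_update (w : Ω → Ω → ℝ) (f : Ω → Ω) (x z : Ω) :
    ∏ v, w v (Function.update f x z v)
      = w x z * ∏ v ∈ univ.erase x, w v (f v) := by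
  rw [← Finset.mul_prod_erase univ _ (mem_univ x), Function.update_self]
  congr 1
  exact Finset.prod_congr rfl fun v hv =>
    congrArg (w v) (Function.update_of_ne (Finset.ne_of_mem_erase hv) z f)

/-- the finset of arborescences rooted at `z` -/
def arbos (z : Ω) : Finset (Ω → Ω) := univ.filter (fun f => IsArbo f z)

def cycs (z : Ω) : Finset (Ω → Ω) := univ.filter (fun g => IsCyc g z)

/-- weight of an arborescence -/
def wt (P : Matrix Ω Ω ℝ) (z : Ω) (f : Ω → Ω) : ℝ := ∏ v ∈ univ.erase z, P v (f v)

/-- total tree weight of a root -/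
def Wgt (P : Matrix Ω Ω ℝ) (z : Ω) : ℝ := ∑ f ∈ arbos z, wt P z f

theorem tree_stationary (P : Matrix Ω Ω ℝ) (hrow : ∀ x, ∑ y, P x y = 1) (z : Ω) :
    ∑ x, Wgt P x * P x z = Wgt P z := by
  have key1 : ∑ x, Wgt P x * P x z = ∑ g ∈ cycs z, ∏ v, P v (g v) := by
    have : ∀ x, Wgt P x * P x z = ∑ f ∈ arbos x, wt P x f * P x z := fun x =>
      Finset.sum_mul _ _ _
    simp_rw [this]
    rw [Finset.sum_sigma' univ (fun x => arbos x) (fun x f => wt P x f * P x z)]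
    refine Finset.sum_nbij' (fun p => Function.update p.2 p.1 z)
      (fun g => ⟨cpred g z, Function.update g (cpred g z) (cpred g z)⟩) ?_ ?_ ?_ ?_ ?_
    · rintro ⟨x, f⟩ hp
      have hf : IsArbo f x := (Finset.mem_filter.1 (Finset.mem_sigma.1 hp).2).2
      exact Finset.mem_filter.2 ⟨mem_univ _, arbo_to_cyc hf⟩
    · intro g hg
      have hg' : IsCyc g z := (Finset.mem_filter.1 hg).2
      exact Finset.mem_sigma.2 ⟨mem_univ _, Finset.mem_filter.2 ⟨mem_univ _, arbo_of_cyc hg'⟩⟩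
    · rintro ⟨x, f⟩ hp
      have hf : IsArbo f x := (Finset.mem_filter.1 (Finset.mem_sigma.1 hp).2).2
      have h1 : cpred (Function.update f x z) z = x := cpred_update hf
      beta_reduce
      rw [h1, update_back hf.1]
    · intro g hg
      have hg' : IsCyc g z := (Finset.mem_filter.1 hg).2
      exact update_forward (g_cpred hg')
    · rintro ⟨x, f⟩ hp
      rw [prod_update (fun a b => P a b) f x z, wt, mul_comm]
  have key2 : Wgt P z = ∑ g ∈ cycs z, ∏ v, P v (g v) := by
    have : Wgt P z = ∑ f ∈ arbos z, ∑ y, wt P z f * P z y := by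
      rw [Wgt]
      refine Finset.sum_congr rfl fun f _ => ?_
      rw [← Finset.mul_sum, hrow z, mul_one]
    rw [this, ← Finset.sum_product']
    refine Finset.sum_nbij' (fun p => Function.update p.1 z p.2)
      (fun g => (Function.update g z z, g z)) ?_ ?_ ?_ ?_ ?_
    · rintro ⟨f, y⟩ hp
      have hf : IsArbo f z := (Finset.mem_filter.1 (Finset.mem_product.1 hp).1).2
      exact Finset.mem_filter.2 ⟨mem_univ _, cyc_of_update_root hf⟩
    · intro g hg
      have hg' : IsCyc g z := (Finset.mem_filter.1 hg).2
      exact Finset.mem_product.2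
        ⟨Finset.mem_filter.2 ⟨mem_univ _, arbo_of_cyc_root hg'⟩, mem_univ _⟩
    · rintro ⟨f, y⟩ hp
      have hf : IsArbo f z := (Finset.mem_filter.1 (Finset.mem_product.1 hp).1).2
      have h1 : Function.update (Function.update f z y) z z = f := update_back hf.1
      have h2 : Function.update f z y z = y := Function.update_self z y f
      simp [h1, h2]
    · intro g hg
      exact update_forward rfl
    · rintro ⟨f, y⟩ hp
      rw [prod_update (fun a b => P a b) f z y, wt, mul_comm]
  rw [key1, key2]

lemma pow_entry_nonneg (P : Matrix Ω Ω ℝ) (hP : ∀ x y, 0 ≤ P x y) :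
    ∀ (n : ℕ) (x y : Ω), 0 ≤ (P ^ n) x y := by
  intro n
  induction n with
  | zero => intro x y; rw [pow_zero]; by_cases h : x = y <;> simp [Matrix.one_apply, h]
  | succ n ih =>
    intro x y
    rw [pow_succ, Matrix.mul_apply]
    exact Finset.sum_nonneg fun k _ => mul_nonneg (ih x k) (hP k y)

lemma stat_pow (P : Matrix Ω Ω ℝ) (v : Ω → ℝ) (hst : ∀ y, ∑ x, v x * P x y = v y) :
    ∀ (n : ℕ) (y : Ω), ∑ x, v x * (P ^ n) x y = v y := by
  intro n
  induction n with
  | zero =>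
    intro y
    simp [Matrix.one_apply, mul_ite, Finset.sum_ite_eq]
  | succ n ih =>
    intro y
    have : ∀ x, v x * (P ^ (n+1)) x y = ∑ k, v x * ((P ^ n) x k * P k y) := by
      intro x; rw [pow_succ, Matrix.mul_apply, Finset.mul_sum]
    simp_rw [this]
    rw [Finset.sum_comm]
    calc ∑ k, ∑ x, v x * ((P ^ n) x k * P k y)
        = ∑ k, (∑ x, v x * (P ^ n) x k) * P k y := by
          refine Finset.sum_congr rfl fun k _ => ?_
          rw [Finset.sum_mul]
          exact Finset.sum_congr rfl fun x _ => (mul_assoc _ _ _).symm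
      _ = ∑ k, v k * P k y := by simp_rw [ih]
      _ = v y := hst y

lemma stat_zero (P : Matrix Ω Ω ℝ) (hP : ∀ x y, 0 ≤ P x y)
    (hirr : ∀ x y, ∃ n, 0 < (P ^ n) x y) (v : Ω → ℝ) (hv0 : ∀ x, 0 ≤ v x)
    (hst : ∀ y, ∑ x, v x * P x y = v y) (z : Ω) (hz : v z = 0) : ∀ x, v x = 0 := by
  intro x
  obtain ⟨n, hn⟩ := hirr x z
  have h1 : ∑ w, v w * (P ^ n) w z = 0 := by rw [stat_pow P v hst n z, hz]
  have h2 : ∀ w ∈ univ, 0 ≤ v w * (P ^ n) w z := fun w _ =>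
    mul_nonneg (hv0 w) (pow_entry_nonneg P hP n w z)
  have h3 := (Finset.sum_eq_zero_iff_of_nonneg h2).1 h1 x (mem_univ x)
  rcases mul_eq_zero.1 h3 with h | h
  · exact h
  · exact absurd h (ne_of_gt hn)

lemma stationary_pos [Nonempty Ω] (P : Matrix Ω Ω ℝ) (hP : ∀ x y, 0 ≤ P x y)
    (hirr : ∀ x y, ∃ n, 0 < (P ^ n) x y) (μ : Ω → ℝ) (hμ0 : ∀ x, 0 ≤ μ x)
    (hμ1 : ∑ x, μ x = 1) (hμs : ∀ y, ∑ x, μ x * P x y = μ y) : ∀ x, 0 < μ x := by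
  intro x
  rcases lt_or_eq_of_le (hμ0 x) with h | h
  · exact h
  · exfalso
    have := stat_zero P hP hirr μ hμ0 hμs x h.symm
    rw [Finset.sum_congr rfl fun w _ => this w, Finset.sum_const, smul_zero] at hμ1
    exact one_ne_zero hμ1.symm

lemma stationary_unique [Nonempty Ω] (P : Matrix Ω Ω ℝ) (hP : ∀ x y, 0 ≤ P x y)
    (hirr : ∀ x y, ∃ n, 0 < (P ^ n) x y)
    (μ ν : Ω → ℝ) (hμ0 : ∀ x, 0 ≤ μ x) (hμ1 : ∑ x, μ x = 1)
    (hμs : ∀ y, ∑ x, μ x * P x y = μ y)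
    (hν0 : ∀ x, 0 ≤ ν x) (hν1 : ∑ x, ν x = 1)
    (hνs : ∀ y, ∑ x, ν x * P x y = ν y) : ∀ x, μ x = ν x := by
  have hμp : ∀ x, 0 < μ x := stationary_pos P hP hirr μ hμ0 hμ1 hμs
  obtain ⟨x₀, -, hx₀⟩ := Finset.exists_min_image univ (fun x => ν x / μ x) univ_nonempty
  set t := ν x₀ / μ x₀ with ht
  set v := fun x => ν x - t * μ x with hv
  have hv0 : ∀ x, 0 ≤ v x := by
    intro x
    have h1 : t ≤ ν x / μ x := hx₀ x (mem_univ x)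
    have h2 : t * μ x ≤ ν x := (le_div_iff₀ (hμp x)).1 h1
    simpa [hv] using sub_nonneg.2 h2
  have hvs : ∀ y, ∑ x, v x * P x y = v y := by
    intro y
    have h : ∀ x, v x * P x y = ν x * P x y - t * (μ x * P x y) := by
      intro x; simp [hv, sub_mul, mul_assoc]
    simp_rw [h]
    rw [Finset.sum_sub_distrib, ← Finset.mul_sum, hμs y, hνs y]
  have hvx₀ : v x₀ = 0 := by
    have : t * μ x₀ = ν x₀ := div_mul_cancel₀ (ν x₀) (ne_of_gt (hμp x₀))
    simp [hv, this]
  have hvz : ∀ x, v x = 0 := stat_zero P hP hirr v hv0 hvs x₀ hvx₀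
  have hνt : ∀ x, ν x = t * μ x := by
    intro x; have := hvz x; simp only [hv] at this; linarith
  have ht1 : t = 1 := by
    have h1 : (1:ℝ) = t := by
      calc (1:ℝ) = ∑ x, ν x := hν1.symm
        _ = ∑ x, t * μ x := Finset.sum_congr rfl fun x _ => hνt x
        _ = t * ∑ x, μ x := by rw [Finset.mul_sum]
        _ = t := by rw [hμ1, mul_one]
    exact h1.symm
  intro x
  rw [hνt x, ht1, one_mul]
lemma first_step (P : Matrix Ω Ω ℝ) (hP : ∀ x y, 0 ≤ P x y) {n : ℕ} {v z : Ω}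
    (h : 0 < (P ^ (n + 1)) v z) : ∃ k, 0 < P v k ∧ 0 < (P ^ n) k z := by
  rw [pow_succ', Matrix.mul_apply] at h
  by_contra hc
  push_neg at hc
  have hz : ∀ k ∈ univ, P v k * (P ^ n) k z = 0 := by
    intro k _
    rcases lt_or_eq_of_le (hP v k) with h1 | h1
    · have h2 := hc k h1
      rw [le_antisymm h2 (pow_entry_nonneg P hP n k z), mul_zero]
    · rw [← h1, zero_mul]
  rw [Finset.sum_eq_zero hz] at h
  exact lt_irrefl 0 h

/-- From irreducibility, an arborescence of positive-probability edges exists at every root. -/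
lemma exists_arbo (P : Matrix Ω Ω ℝ) (hP : ∀ x y, 0 ≤ P x y)
    (hirr : ∀ x y, ∃ n, 0 < (P ^ n) x y) (z : Ω) :
    ∃ f : Ω → Ω, IsArbo f z ∧ ∀ v, v ≠ z → 0 < P v (f v) := by
  have hex : ∀ v, ∃ n, 0 < (P ^ n) v z := fun v => hirr v z
  have hd1 : ∀ v, v ≠ z → Nat.find (hex v) ≠ 0 := by
    intro v hv h0
    have hsp := Nat.find_spec (hex v)
    rw [h0, pow_zero, Matrix.one_apply_ne hv] at hsp
    exact lt_irrefl 0 hsp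
  have hstep : ∀ v, v ≠ z → ∃ k, 0 < P v k ∧ 0 < (P ^ (Nat.find (hex v) - 1)) k z := by
    intro v hv
    have h := Nat.find_spec (hex v)
    have heq : Nat.find (hex v) = (Nat.find (hex v) - 1) + 1 :=
      (Nat.succ_pred_eq_of_pos (Nat.pos_of_ne_zero (hd1 v hv))).symm
    rw [heq] at h
    exact first_step P hP h
  set f : Ω → Ω := fun v => if hv : v = z then z else Classical.choose (hstep v hv) with hf
  have hfs : ∀ v (hv : v ≠ z), 0 < P v (f v) ∧ Nat.find (hex (f v)) < Nat.find (hex v) := by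
    intro v hv
    have hfv : f v = Classical.choose (hstep v hv) := by rw [hf]; exact dif_neg hv
    have hsp := Classical.choose_spec (hstep v hv)
    refine ⟨by rw [hfv]; exact hsp.1, ?_⟩
    rw [hfv]
    exact lt_of_le_of_lt (Nat.find_le hsp.2)
      (Nat.sub_lt (Nat.pos_of_ne_zero (hd1 v hv)) one_pos)
  refine ⟨f, ⟨by rw [hf]; exact dif_pos rfl, ?_⟩, fun v hv => (hfs v hv).1⟩
  have key : ∀ (m : ℕ) (v : Ω), Nat.find (hex v) ≤ m → ∃ n, f^[n] v = z := by
    intro m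
    induction m with
    | zero =>
      intro v hv
      by_cases h : v = z
      · exact ⟨0, h⟩
      · exact absurd (Nat.le_zero.1 hv) (hd1 v h)
    | succ m ih =>
      intro v hv
      by_cases h : v = z
      · exact ⟨0, h⟩
      · obtain ⟨n, hn⟩ := ih (f v) (Nat.lt_succ_iff.1 (lt_of_lt_of_le (hfs v h).2 hv))
        exact ⟨n + 1, by rw [Function.iterate_succ_apply, hn]⟩
  exact fun v => key (Nat.find (hex v)) v le_rfl

/-- the edge set of a functional arborescence -/
def arboEdges (f : Ω → Ω) (z : Ω) : Finset (Ω × Ω) := (univ.erase z).image (fun v => (v, f v))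

lemma mem_arboEdges {f : Ω → Ω} {z : Ω} {p : Ω × Ω} :
    p ∈ arboEdges f z ↔ p.1 ≠ z ∧ p.2 = f p.1 := by
  constructor
  · intro hp
    obtain ⟨v, hv, hvp⟩ := Finset.mem_image.1 hp
    rw [← hvp]
    exact ⟨Finset.ne_of_mem_erase hv, rfl⟩
  · rintro ⟨h1, h2⟩
    refine Finset.mem_image.2 ⟨p.1, Finset.mem_erase.2 ⟨h1, mem_univ _⟩, ?_⟩
    rw [← h2]

/-- existence of a path in the edge set of an arborescence -/
lemma arbo_path_exists {f : Ω → Ω} {z : Ω} :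
    ∀ (n : ℕ) (w : Ω), f^[n] w = z → ∃ l, pathOK (↑(arboEdges f z) : Set (Ω × Ω)) w z l := by
  intro n
  induction n with
  | zero => intro w hw; exact ⟨[], hw⟩
  | succ n ih =>
    intro w hw
    by_cases h : w = z
    · exact ⟨[], h⟩
    · obtain ⟨l, hl⟩ := ih (f w) (by rwa [Function.iterate_succ_apply] at hw)
      exact ⟨f w :: l, Finset.mem_coe.2 (mem_arboEdges.2 ⟨h, rfl⟩), hl⟩

lemma arbo_path_unique {f : Ω → Ω} {z : Ω} :
    ∀ (l1 l2 : List Ω) (w : Ω), pathOK (↑(arboEdges f z) : Set (Ω × Ω)) w z l1 →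
      pathOK (↑(arboEdges f z) : Set (Ω × Ω)) w z l2 → l1 = l2 := by
  intro l1
  induction l1 with
  | nil =>
    intro l2 w h1 h2
    cases l2 with
    | nil => rfl
    | cons b t =>
      exact absurd h1 (mem_arboEdges.1 (Finset.mem_coe.1 h2.1)).1
  | cons b t ih =>
    intro l2 w h1 h2
    cases l2 with
    | nil => exact absurd h2 (mem_arboEdges.1 (Finset.mem_coe.1 h1.1)).1
    | cons b' t' =>
      have hb : b = f w := (mem_arboEdges.1 (Finset.mem_coe.1 h1.1)).2
      have hb' : b' = f w := (mem_arboEdges.1 (Finset.mem_coe.1 h2.1)).2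
      subst hb
      rw [hb'] at h2 ⊢
      rw [ih t' (f w) h1.2 h2.2]

/-- C1 : an arborescence with allowed edges gives a rooted tree of the same resistance. -/
lemma arbo_to_tree (P : ℝ → Matrix Ω Ω ℝ) (res : Ω → Ω → ℝ) {f : Ω → Ω} {z : Ω}
    (hf : IsArbo f z) (hall : ∀ v, v ≠ z → Allowed P v (f v)) :
    IsRootedTree P (arboEdges f z) z ∧
      treeRes res (arboEdges f z) = ∑ v ∈ univ.erase z, res v (f v) := by
  refine ⟨⟨?_, ?_⟩, ?_⟩
  · intro p hp
    have h := mem_arboEdges.1 hp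
    rw [h.2]
    exact hall p.1 h.1
  · intro w hw
    obtain ⟨n, hn⟩ := hf.2 w
    obtain ⟨l, hl⟩ := arbo_path_exists n w hn
    exact ⟨l, hl, fun l' hl' => arbo_path_unique l' l w hl' hl⟩
  · rw [treeRes, arboEdges, Finset.sum_image]
    intro a _ b _ hab
    exact congrArg Prod.fst hab

/-- C2 : a rooted tree contains an arborescence of no larger resistance. -/
lemma tree_to_arbo (P : ℝ → Matrix Ω Ω ℝ) (res : Ω → Ω → ℝ) {T : Finset (Ω × Ω)} {z : Ω}
    (hT : IsRootedTree P T z) (hresnn : ∀ p ∈ T, 0 ≤ res p.1 p.2) :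
    ∃ f : Ω → Ω, IsArbo f z ∧ (∀ v, v ≠ z → (v, f v) ∈ T) ∧
      ∑ v ∈ univ.erase z, res v (f v) ≤ treeRes res T := by
  haveI : Inhabited Ω := ⟨z⟩
  set f : Ω → Ω := fun w => if hw : w = z then z else (Classical.choose (hT.2 w hw)).headI
    with hfdef
  have hfz : f z = z := by rw [hfdef]; exact dif_pos rfl
  have hkey : ∀ w (hw : w ≠ z), (w, f w) ∈ T ∧
      pathOK (↑T : Set (Ω × Ω)) (f w) z (Classical.choose (hT.2 w hw)).tail := by
    intro w hw
    have hfw : f w = (Classical.choose (hT.2 w hw)).headI := by rw [hfdef]; exact dif_neg hw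
    have hsp := (Classical.choose_spec (hT.2 w hw)).1
    rcases hl : Classical.choose (hT.2 w hw) with _ | ⟨b, t⟩
    · rw [hl] at hsp; exact absurd hsp hw
    · rw [hl] at hsp
      rw [hfw, hl]
      exact ⟨Finset.mem_coe.1 hsp.1, hsp.2⟩
  have huniq : ∀ (l : List Ω) (w : Ω) (hw : w ≠ z), pathOK (↑T : Set (Ω × Ω)) w z l →
      l = Classical.choose (hT.2 w hw) :=
    fun l w hw hl => (Classical.choose_spec (hT.2 w hw)).2 l hl
  have hreach : ∀ (l : List Ω) (w : Ω), pathOK (↑T : Set (Ω × Ω)) w z l → ∃ n, f^[n] w = z := by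
    intro l
    induction l with
    | nil => intro w hw; exact ⟨0, hw⟩
    | cons b t ih =>
      intro w hw
      by_cases h : w = z
      · exact ⟨0, h⟩
      · have hchoose : Classical.choose (hT.2 w h) = b :: t := (huniq (b :: t) w h hw).symm
        have hfw : f w = b := by
          have : f w = (Classical.choose (hT.2 w h)).headI := by rw [hfdef]; exact dif_neg h
          rw [this, hchoose]; rfl
        obtain ⟨n, hn⟩ := ih b hw.2
        refine ⟨n + 1, ?_⟩
        rw [Function.iterate_succ_apply, hfw, hn]
  refine ⟨f, ⟨hfz, ?_⟩, fun v hv => (hkey v hv).1, ?_⟩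
  · intro v
    by_cases h : v = z
    · exact ⟨0, h⟩
    · obtain ⟨l, hl⟩ := hT.2 v h
      exact hreach l v hl.1
  · have hsub : (univ.erase z).image (fun v => (v, f v)) ⊆ T := by
      intro p hp
      obtain ⟨v, hv, hvp⟩ := Finset.mem_image.1 hp
      rw [← hvp]
      exact (hkey v (Finset.ne_of_mem_erase hv)).1
    have hinj : ∀ a ∈ univ.erase z, ∀ b ∈ univ.erase z,
        (fun v => (v, f v)) a = (fun v => (v, f v)) b → a = b :=
      fun a _ b _ hab => congrArg Prod.fst hab
    calc ∑ v ∈ univ.erase z, res v (f v)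
        = ∑ p ∈ (univ.erase z).image (fun v => (v, f v)), res p.1 p.2 := by
          rw [Finset.sum_image hinj]
      _ ≤ treeRes res T :=
          Finset.sum_le_sum_of_subset_of_nonneg hsub fun p hp _ => hresnn p hp

def AllowedE (P : ℝ → Matrix Ω Ω ℝ) (x y : Ω) : Prop := ∀ ε > (0 : ℝ), 0 < P ε x y

def goodArbos (P : ℝ → Matrix Ω Ω ℝ) (z : Ω) : Finset (Ω → Ω) :=
  univ.filter (fun f => IsArbo f z ∧ ∀ v, v ≠ z → AllowedE P v (f v))

def aRes (res : Ω → Ω → ℝ) (z : Ω) (f : Ω → Ω) : ℝ := ∑ v ∈ univ.erase z, res v (f v)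

/-- minimal arborescence resistance at root `z` -/
def gamma (P : ℝ → Matrix Ω Ω ℝ) (res : Ω → Ω → ℝ) (z : Ω) : ℝ :=
  sInf (aRes res z '' ↑(goodArbos P z))

/-- globally minimal arborescence resistance -/
def gammaStar (P : ℝ → Matrix Ω Ω ℝ) (res : Ω → Ω → ℝ) : ℝ :=
  sInf (Set.range (gamma P res))

section Hyps
variable (P : ℝ → Matrix Ω Ω ℝ) (res : Ω → Ω → ℝ)

lemma allowedE_of_allowed (hreg : ∀ x y : Ω, (∀ ε > (0 : ℝ), 0 < P ε x y) ∨
    (∀ ε > (0 : ℝ), P ε x y = 0)) {x y : Ω} (h : Allowed P x y) : AllowedE P x y := by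
  rcases hreg x y with h1 | h1
  · exact h1
  · obtain ⟨ε, hε, hpos⟩ := h
    rw [h1 ε hε] at hpos
    exact absurd hpos (lt_irrefl 0)

lemma allowed_of_allowedE {x y : Ω} (h : AllowedE P x y) : Allowed P x y :=
  ⟨1, one_pos, h 1 one_pos⟩

lemma res_nonneg (hstoch : ∀ ε ≥ (0 : ℝ), (∀ x y, 0 ≤ P ε x y) ∧ (∀ x, ∑ y, P ε x y = 1))
    (hres0 : ∀ x y : Ω, 0 < P 0 x y → res x y = 0)
    (hresTheta : ∀ x y : Ω, P 0 x y = 0 → (∀ ε > (0 : ℝ), 0 < P ε x y) →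
      0 < res x y ∧ ∃ c C : ℝ, 0 < c ∧ 0 < C ∧
        ∀ᶠ ε in nhdsWithin (0 : ℝ) (Set.Ioi 0),
          c * ε ^ res x y ≤ P ε x y ∧ P ε x y ≤ C * ε ^ res x y)
    {x y : Ω} (h : AllowedE P x y) : 0 ≤ res x y := by
  rcases lt_or_eq_of_le ((hstoch 0 le_rfl).1 x y) with h0 | h0
  · exact le_of_eq (hres0 x y h0).symm
  · exact le_of_lt (hresTheta x y h0.symm h).1

/-- each allowed edge is Θ(ε^res). -/
lemma edge_theta (hstoch : ∀ ε ≥ (0 : ℝ), (∀ x y, 0 ≤ P ε x y) ∧ (∀ x, ∑ y, P ε x y = 1))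
    (hlim : ∀ x y : Ω, Tendsto (fun ε => P ε x y) (nhdsWithin 0 (Set.Ioi 0)) (nhds (P 0 x y)))
    (hres0 : ∀ x y : Ω, 0 < P 0 x y → res x y = 0)
    (hresTheta : ∀ x y : Ω, P 0 x y = 0 → (∀ ε > (0 : ℝ), 0 < P ε x y) →
      0 < res x y ∧ ∃ c C : ℝ, 0 < c ∧ 0 < C ∧
        ∀ᶠ ε in nhdsWithin (0 : ℝ) (Set.Ioi 0),
          c * ε ^ res x y ≤ P ε x y ∧ P ε x y ≤ C * ε ^ res x y)
    {x y : Ω} (h : AllowedE P x y) :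
    ∃ c C : ℝ, 0 < c ∧ 0 < C ∧ ∀ᶠ ε in nhdsWithin (0 : ℝ) (Set.Ioi 0),
      c * ε ^ res x y ≤ P ε x y ∧ P ε x y ≤ C * ε ^ res x y := by
  rcases lt_or_eq_of_le ((hstoch 0 le_rfl).1 x y) with h0 | h0
  · refine ⟨P 0 x y / 2, 1, by linarith, one_pos, ?_⟩
    have h1 : ∀ᶠ ε in nhdsWithin (0:ℝ) (Set.Ioi 0), P 0 x y / 2 < P ε x y :=
      (hlim x y).eventually (eventually_gt_nhds (by linarith))
    have h2 : ∀ᶠ ε in nhdsWithin (0:ℝ) (Set.Ioi 0), ε ∈ Set.Ioi (0:ℝ) :=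
      eventually_mem_nhdsWithin
    filter_upwards [h1, h2] with ε hε1 hε2
    rw [hres0 x y h0, Real.rpow_zero, mul_one, mul_one]
    refine ⟨le_of_lt hε1, ?_⟩
    have hrow := (hstoch ε (le_of_lt hε2)).2 x
    have hnn := (hstoch ε (le_of_lt hε2)).1
    calc P ε x y ≤ ∑ y', P ε x y' :=
          Finset.single_le_sum (fun y' _ => hnn x y') (mem_univ y)
      _ = 1 := hrow
  · exact (hresTheta x y h0.symm h).2

/-- the weight of a good arborescence is Θ(ε^aRes). -/
lemma tree_theta (hstoch : ∀ ε ≥ (0 : ℝ), (∀ x y, 0 ≤ P ε x y) ∧ (∀ x, ∑ y, P ε x y = 1))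
    (hlim : ∀ x y : Ω, Tendsto (fun ε => P ε x y) (nhdsWithin 0 (Set.Ioi 0)) (nhds (P 0 x y)))
    (hres0 : ∀ x y : Ω, 0 < P 0 x y → res x y = 0)
    (hresTheta : ∀ x y : Ω, P 0 x y = 0 → (∀ ε > (0 : ℝ), 0 < P ε x y) →
      0 < res x y ∧ ∃ c C : ℝ, 0 < c ∧ 0 < C ∧
        ∀ᶠ ε in nhdsWithin (0 : ℝ) (Set.Ioi 0),
          c * ε ^ res x y ≤ P ε x y ∧ P ε x y ≤ C * ε ^ res x y)
    {z : Ω} {f : Ω → Ω} (hf : f ∈ goodArbos P z) :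
    ∃ c C : ℝ, 0 < c ∧ 0 < C ∧ ∀ᶠ ε in nhdsWithin (0 : ℝ) (Set.Ioi 0),
      c * ε ^ aRes res z f ≤ wt (P ε) z f ∧ wt (P ε) z f ≤ C * ε ^ aRes res z f := by
  have hall : ∀ v, v ≠ z → AllowedE P v (f v) := (Finset.mem_filter.1 hf).2.2
  have hedge : ∀ v ∈ univ.erase z, ∃ c C : ℝ, 0 < c ∧ 0 < C ∧
      ∀ᶠ ε in nhdsWithin (0 : ℝ) (Set.Ioi 0),
        c * ε ^ res v (f v) ≤ P ε v (f v) ∧ P ε v (f v) ≤ C * ε ^ res v (f v) := by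
    intro v hv
    exact edge_theta P res hstoch hlim hres0 hresTheta (hall v (Finset.ne_of_mem_erase hv))
  choose! c C hc hC hev using hedge
  refine ⟨∏ v ∈ univ.erase z, c v, ∏ v ∈ univ.erase z, C v,
    Finset.prod_pos hc, Finset.prod_pos hC, ?_⟩
  have hall_ev : ∀ᶠ ε in nhdsWithin (0 : ℝ) (Set.Ioi 0), ∀ v ∈ univ.erase z,
      c v * ε ^ res v (f v) ≤ P ε v (f v) ∧ P ε v (f v) ≤ C v * ε ^ res v (f v) :=
    (Filter.eventually_all_finset _).2 hev
  filter_upwards [hall_ev, eventually_mem_nhdsWithin] with ε hev' (hε : ε ∈ Set.Ioi 0)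
  have hεpos : (0:ℝ) < ε := hε
  have hrpow : ∀ r : ℝ, (0:ℝ) < ε ^ r := fun r => Real.rpow_pos_of_pos hεpos r
  have hsplit : ∀ (k : Ω → ℝ), (∏ v ∈ univ.erase z, k v) * ε ^ aRes res z f
      = ∏ v ∈ univ.erase z, k v * ε ^ res v (f v) := by
    intro k
    rw [aRes, Real.rpow_sum_of_pos hεpos, ← Finset.prod_mul_distrib]
  constructor
  · rw [hsplit c]
    exact Finset.prod_le_prod (fun v hv => le_of_lt (mul_pos (hc v hv) (hrpow _)))
      (fun v hv => (hev' v hv).1)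
  · rw [hsplit C]
    exact Finset.prod_le_prod (fun v hv => (hstoch ε (le_of_lt hεpos)).1 v (f v))
      (fun v hv => (hev' v hv).2)
end Hyps

-- resume hypothesis section
section Hyps2
variable (P : ℝ → Matrix Ω Ω ℝ) (res : Ω → Ω → ℝ) (μ : ℝ → Ω → ℝ)

lemma Wgt_eq_good (hreg : ∀ x y : Ω, (∀ ε > (0 : ℝ), 0 < P ε x y) ∨
    (∀ ε > (0 : ℝ), P ε x y = 0)) {ε : ℝ} (hε : 0 < ε) (z : Ω) :
    Wgt (P ε) z = ∑ f ∈ goodArbos P z, wt (P ε) z f := by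
  rw [Wgt]
  refine (Finset.sum_subset ?_ ?_).symm
  · intro f hf
    exact Finset.mem_filter.2 ⟨mem_univ _, (Finset.mem_filter.1 hf).2.1⟩
  · intro f hf hnf
    have harb : IsArbo f z := (Finset.mem_filter.1 hf).2
    have : ¬ (IsArbo f z ∧ ∀ v, v ≠ z → AllowedE P v (f v)) := fun hg =>
      hnf (Finset.mem_filter.2 ⟨mem_univ _, hg⟩)
    push_neg at this
    obtain ⟨v, hv, hnall⟩ := this harb
    have hzero : P ε v (f v) = 0 := by
      rcases hreg v (f v) with h | h
      · exact absurd h hnall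
      · exact h ε hε
    exact Finset.prod_eq_zero (Finset.mem_erase.2 ⟨hv, mem_univ v⟩) hzero

lemma goodArbos_nonempty
    (hstoch : ∀ ε ≥ (0 : ℝ), (∀ x y, 0 ≤ P ε x y) ∧ (∀ x, ∑ y, P ε x y = 1))
    (hirr : ∀ ε > (0 : ℝ), ∀ x y : Ω, ∃ n : ℕ, 0 < ((P ε) ^ n) x y)
    (hreg : ∀ x y : Ω, (∀ ε > (0 : ℝ), 0 < P ε x y) ∨ (∀ ε > (0 : ℝ), P ε x y = 0))
    (z : Ω) : (goodArbos P z).Nonempty := by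
  obtain ⟨f, hf, hpos⟩ := exists_arbo (P 1) ((hstoch 1 zero_le_one).1) (hirr 1 one_pos) z
  refine ⟨f, Finset.mem_filter.2 ⟨mem_univ _, hf, fun v hv => ?_⟩⟩
  rcases hreg v (f v) with h | h
  · exact h
  · exact absurd (h 1 one_pos) (ne_of_gt (hpos v hv))

lemma gamma_le {z : Ω} {f : Ω → Ω} (hf : f ∈ goodArbos P z) :
    gamma P res z ≤ aRes res z f :=
  csInf_le ((Set.Finite.image _ (goodArbos P z).finite_toSet).bddBelow)
    (Set.mem_image_of_mem _ hf)

lemma gamma_mem {z : Ω} (hne : (goodArbos P z).Nonempty) :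
    ∃ f ∈ goodArbos P z, aRes res z f = gamma P res z := by
  have hfin : (aRes res z '' ↑(goodArbos P z)).Finite :=
    Set.Finite.image _ (goodArbos P z).finite_toSet
  have hne' : (aRes res z '' ↑(goodArbos P z)).Nonempty :=
    Set.Nonempty.image _ (by exact_mod_cast hne.to_set)
  obtain ⟨f, hf, hval⟩ := hne'.csInf_mem hfin
  exact ⟨f, by exact_mod_cast hf, hval⟩

lemma gammaStar_le [Nonempty Ω] (z : Ω) : gammaStar P res ≤ gamma P res z :=
  csInf_le (Set.Finite.bddBelow (Set.finite_range _)) (Set.mem_range_self z)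

lemma gammaStar_mem [Nonempty Ω] : ∃ z : Ω, gamma P res z = gammaStar P res := by
  obtain ⟨x, hx⟩ := (Set.range_nonempty (gamma P res)).csInf_mem (Set.finite_range _)
  exact ⟨x, hx⟩

lemma wt_nonneg {ε : ℝ} (hε : 0 ≤ ε)
    (hstoch : ∀ ε ≥ (0 : ℝ), (∀ x y, 0 ≤ P ε x y) ∧ (∀ x, ∑ y, P ε x y = 1))
    (z : Ω) (f : Ω → Ω) : 0 ≤ wt (P ε) z f :=
  Finset.prod_nonneg fun v _ => (hstoch ε hε).1 v (f v)

lemma Wgt_pos {ε : ℝ} (hε : 0 < ε)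
    (hstoch : ∀ ε ≥ (0 : ℝ), (∀ x y, 0 ≤ P ε x y) ∧ (∀ x, ∑ y, P ε x y = 1))
    (hirr : ∀ ε > (0 : ℝ), ∀ x y : Ω, ∃ n : ℕ, 0 < ((P ε) ^ n) x y)
    (hreg : ∀ x y : Ω, (∀ ε > (0 : ℝ), 0 < P ε x y) ∨ (∀ ε > (0 : ℝ), P ε x y = 0))
    (z : Ω) : 0 < Wgt (P ε) z := by
  obtain ⟨f₀, hf₀⟩ := goodArbos_nonempty P hstoch hirr hreg z
  rw [Wgt_eq_good P hreg hε z]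
  refine Finset.sum_pos' (fun f _ => wt_nonneg P (le_of_lt hε) hstoch z f) ⟨f₀, hf₀, ?_⟩
  refine Finset.prod_pos fun v hv => ?_
  exact (Finset.mem_filter.1 hf₀).2.2 v (Finset.ne_of_mem_erase hv) ε hε

/-- Θ-bounds for the total tree weight. -/
lemma W_theta [Nonempty Ω]
    (hstoch : ∀ ε ≥ (0 : ℝ), (∀ x y, 0 ≤ P ε x y) ∧ (∀ x, ∑ y, P ε x y = 1))
    (hirr : ∀ ε > (0 : ℝ), ∀ x y : Ω, ∃ n : ℕ, 0 < ((P ε) ^ n) x y)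
    (hreg : ∀ x y : Ω, (∀ ε > (0 : ℝ), 0 < P ε x y) ∨ (∀ ε > (0 : ℝ), P ε x y = 0))
    (hlim : ∀ x y : Ω, Tendsto (fun ε => P ε x y) (nhdsWithin 0 (Set.Ioi 0)) (nhds (P 0 x y)))
    (hres0 : ∀ x y : Ω, 0 < P 0 x y → res x y = 0)
    (hresTheta : ∀ x y : Ω, P 0 x y = 0 → (∀ ε > (0 : ℝ), 0 < P ε x y) →
      0 < res x y ∧ ∃ c C : ℝ, 0 < c ∧ 0 < C ∧
        ∀ᶠ ε in nhdsWithin (0 : ℝ) (Set.Ioi 0),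
          c * ε ^ res x y ≤ P ε x y ∧ P ε x y ≤ C * ε ^ res x y)
    (z : Ω) :
    ∃ c C : ℝ, 0 < c ∧ 0 < C ∧ ∀ᶠ ε in nhdsWithin (0 : ℝ) (Set.Ioi 0),
      c * ε ^ gamma P res z ≤ Wgt (P ε) z ∧ Wgt (P ε) z ≤ C * ε ^ gamma P res z := by
  have hne := goodArbos_nonempty P hstoch hirr hreg z
  obtain ⟨f₀, hf₀, hf₀min⟩ := gamma_mem P res hne
  have htheta : ∀ f ∈ goodArbos P z, ∃ c C : ℝ, 0 < c ∧ 0 < C ∧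
      ∀ᶠ ε in nhdsWithin (0 : ℝ) (Set.Ioi 0),
        c * ε ^ aRes res z f ≤ wt (P ε) z f ∧ wt (P ε) z f ≤ C * ε ^ aRes res z f :=
    fun f hf => tree_theta P res hstoch hlim hres0 hresTheta hf
  choose! c C hc hC hev using htheta
  refine ⟨c f₀, ∑ f ∈ goodArbos P z, C f, hc f₀ hf₀,
    Finset.sum_pos (fun f hf => hC f hf) hne, ?_⟩
  have hall_ev := (Filter.eventually_all_finset (goodArbos P z)).2 hev
  have hlt1 : ∀ᶠ ε in nhdsWithin (0:ℝ) (Set.Ioi 0), ε < 1 :=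
    Filter.Eventually.filter_mono nhdsWithin_le_nhds (eventually_lt_nhds one_pos)
  filter_upwards [hall_ev, hlt1, eventually_mem_nhdsWithin] with ε hev' hε1 (hε : ε ∈ Set.Ioi 0)
  have hεpos : (0:ℝ) < ε := hε
  constructor
  · calc c f₀ * ε ^ gamma P res z = c f₀ * ε ^ aRes res z f₀ := by rw [hf₀min]
      _ ≤ wt (P ε) z f₀ := (hev' f₀ hf₀).1
      _ ≤ Wgt (P ε) z := by
          rw [Wgt_eq_good P hreg hεpos z]
          exact Finset.single_le_sum
            (fun f _ => wt_nonneg P (le_of_lt hεpos) hstoch z f) hf₀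
  · rw [Wgt_eq_good P hreg hεpos z, Finset.sum_mul]
    refine Finset.sum_le_sum fun f hf => ?_
    calc wt (P ε) z f ≤ C f * ε ^ aRes res z f := (hev' f hf).2
      _ ≤ C f * ε ^ gamma P res z := by
          refine mul_le_mul_of_nonneg_left ?_ (le_of_lt (hC f hf))
          exact Real.rpow_le_rpow_of_exponent_ge hεpos (le_of_lt hε1) (gamma_le P res hf)

lemma mu_eq [Nonempty Ω]
    (hstoch : ∀ ε ≥ (0 : ℝ), (∀ x y, 0 ≤ P ε x y) ∧ (∀ x, ∑ y, P ε x y = 1))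
    (hirr : ∀ ε > (0 : ℝ), ∀ x y : Ω, ∃ n : ℕ, 0 < ((P ε) ^ n) x y)
    (hreg : ∀ x y : Ω, (∀ ε > (0 : ℝ), 0 < P ε x y) ∨ (∀ ε > (0 : ℝ), P ε x y = 0))
    (μ : ℝ → Ω → ℝ)
    (hμ : ∀ ε > (0 : ℝ), (∀ x, 0 ≤ μ ε x) ∧ (∑ x, μ ε x = 1) ∧
      (∀ y, ∑ x, μ ε x * P ε x y = μ ε y))
    {ε : ℝ} (hε : 0 < ε) :
    ∀ x, μ ε x = Wgt (P ε) x / (∑ y, Wgt (P ε) y) := by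
  set S := ∑ y, Wgt (P ε) y with hS
  have hSpos : 0 < S :=
    Finset.sum_pos (fun y _ => Wgt_pos P hε hstoch hirr hreg y) univ_nonempty
  refine stationary_unique (P ε) ((hstoch ε (le_of_lt hε)).1) (hirr ε hε)
    (μ ε) _ (hμ ε hε).1 (hμ ε hε).2.1 (hμ ε hε).2.2 ?_ ?_ ?_
  · intro x
    exact div_nonneg (le_of_lt (Wgt_pos P hε hstoch hirr hreg x)) (le_of_lt hSpos)
  · rw [← Finset.sum_div, ← hS, div_self (ne_of_gt hSpos)]
  · intro y
    have h1 : ∀ x, Wgt (P ε) x / S * P ε x y = Wgt (P ε) x * P ε x y / S := fun x =>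
      div_mul_eq_mul_div _ _ _
    simp_rw [h1]
    rw [← Finset.sum_div, tree_stationary (P ε) ((hstoch ε (le_of_lt hε)).2) y]

lemma rpow_tendsto {d : ℝ} (hd : 0 < d) :
    Tendsto (fun ε : ℝ => ε ^ d) (nhdsWithin (0:ℝ) (Set.Ioi 0)) (nhds 0) := by
  have h1 : Tendsto (fun ε : ℝ => Real.log ε * d) (nhdsWithin (0:ℝ) (Set.Ioi 0)) atBot :=
    Real.tendsto_log_nhdsGT_zero.atBot_mul_const hd
  have h2 := Real.tendsto_exp_atBot.comp h1
  refine Tendsto.congr' ?_ h2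
  filter_upwards [eventually_mem_nhdsWithin] with ε (hε : ε ∈ Set.Ioi 0)
  exact (Real.rpow_def_of_pos hε d).symm

lemma mu_le_one
    (hstoch : ∀ ε ≥ (0 : ℝ), (∀ x y, 0 ≤ P ε x y) ∧ (∀ x, ∑ y, P ε x y = 1))
    (μ : ℝ → Ω → ℝ)
    (hμ : ∀ ε > (0 : ℝ), (∀ x, 0 ≤ μ ε x) ∧ (∑ x, μ ε x = 1) ∧
      (∀ y, ∑ x, μ ε x * P ε x y = μ ε y)) (z : Ω) :
    ∀ᶠ ε in nhdsWithin (0:ℝ) (Set.Ioi 0), μ ε z ≤ 1 := by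
  filter_upwards [eventually_mem_nhdsWithin] with ε (hε : ε ∈ Set.Ioi 0)
  calc μ ε z ≤ ∑ x, μ ε x :=
        Finset.single_le_sum (fun x _ => (hμ ε hε).1 x) (mem_univ z)
    _ = 1 := (hμ ε hε).2.1

lemma mu_nonneg
    (μ : ℝ → Ω → ℝ)
    (hμ : ∀ ε > (0 : ℝ), (∀ x, 0 ≤ μ ε x) ∧ (∑ x, μ ε x = 1) ∧
      (∀ y, ∑ x, μ ε x * P ε x y = μ ε y)) (z : Ω) :
    ∀ᶠ ε in nhdsWithin (0:ℝ) (Set.Ioi 0), 0 ≤ μ ε z := by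
  filter_upwards [eventually_mem_nhdsWithin] with ε (hε : ε ∈ Set.Ioi 0)
  exact (hμ ε hε).1 z

lemma stable_of_gamma_eq [Nonempty Ω]
    (hstoch : ∀ ε ≥ (0 : ℝ), (∀ x y, 0 ≤ P ε x y) ∧ (∀ x, ∑ y, P ε x y = 1))
    (hirr : ∀ ε > (0 : ℝ), ∀ x y : Ω, ∃ n : ℕ, 0 < ((P ε) ^ n) x y)
    (hreg : ∀ x y : Ω, (∀ ε > (0 : ℝ), 0 < P ε x y) ∨ (∀ ε > (0 : ℝ), P ε x y = 0))
    (hlim : ∀ x y : Ω, Tendsto (fun ε => P ε x y) (nhdsWithin 0 (Set.Ioi 0)) (nhds (P 0 x y)))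
    (hres0 : ∀ x y : Ω, 0 < P 0 x y → res x y = 0)
    (hresTheta : ∀ x y : Ω, P 0 x y = 0 → (∀ ε > (0 : ℝ), 0 < P ε x y) →
      0 < res x y ∧ ∃ c C : ℝ, 0 < c ∧ 0 < C ∧
        ∀ᶠ ε in nhdsWithin (0 : ℝ) (Set.Ioi 0),
          c * ε ^ res x y ≤ P ε x y ∧ P ε x y ≤ C * ε ^ res x y)
    (hμ : ∀ ε > (0 : ℝ), (∀ x, 0 ≤ μ ε x) ∧ (∑ x, μ ε x = 1) ∧
      (∀ y, ∑ x, μ ε x * P ε x y = μ ε y))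
    {z : Ω}
    (hγ : gamma P res z = gammaStar P res) :
    0 < liminf (fun ε => μ ε z) (nhdsWithin (0:ℝ) (Set.Ioi 0)) := by
  have hW := fun y => W_theta P res hstoch hirr hreg hlim hres0 hresTheta y
  choose c C hc hC hev using hW
  set K : ℝ := c z / ∑ y, C y with hK
  have hCs : (0:ℝ) < ∑ y, C y := Finset.sum_pos (fun y _ => hC y) univ_nonempty
  have hKpos : 0 < K := div_pos (hc z) hCs
  have hall_ev := (Filter.eventually_all_finset (univ : Finset Ω)).2 fun y _ => hev y
  have hlt1 : ∀ᶠ ε in nhdsWithin (0:ℝ) (Set.Ioi 0), ε < 1 :=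
    Filter.Eventually.filter_mono nhdsWithin_le_nhds (eventually_lt_nhds one_pos)
  have hKle : ∀ᶠ ε in nhdsWithin (0:ℝ) (Set.Ioi 0), K ≤ μ ε z := by
    filter_upwards [hall_ev, hlt1, eventually_mem_nhdsWithin] with ε hev' hε1
      (hε : ε ∈ Set.Ioi 0)
    have hεpos : (0:ℝ) < ε := hε
    have hrpos : (0:ℝ) < ε ^ gammaStar P res := Real.rpow_pos_of_pos hεpos _
    set S := ∑ y, Wgt (P ε) y with hS
    have hSpos : 0 < S := Finset.sum_pos (fun y _ => Wgt_pos P hεpos hstoch hirr hreg y) univ_nonempty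
    have hup : S ≤ (∑ y, C y) * ε ^ gammaStar P res := by
      rw [hS, Finset.sum_mul]
      refine Finset.sum_le_sum fun y _ => ?_
      calc Wgt (P ε) y ≤ C y * ε ^ gamma P res y := (hev' y (mem_univ y)).2
        _ ≤ C y * ε ^ gammaStar P res := by
            refine mul_le_mul_of_nonneg_left ?_ (le_of_lt (hC y))
            exact Real.rpow_le_rpow_of_exponent_ge hεpos (le_of_lt hε1)
              (gammaStar_le P res y)
    have hlow : c z * ε ^ gammaStar P res ≤ Wgt (P ε) z := by
      rw [← hγ]; exact (hev' z (mem_univ z)).1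
    rw [mu_eq P hstoch hirr hreg μ hμ hεpos z, ← hS]
    calc K = c z * ε ^ gammaStar P res / ((∑ y, C y) * ε ^ gammaStar P res) := by
          rw [mul_div_mul_right _ _ (ne_of_gt hrpos)]
      _ ≤ Wgt (P ε) z / S :=
          div_le_div₀ (le_of_lt (Wgt_pos P hεpos hstoch hirr hreg z)) hlow hSpos hup
  have hbdd : IsCoboundedUnder (· ≥ ·) (nhdsWithin (0:ℝ) (Set.Ioi 0)) (fun ε => μ ε z) :=
    isCoboundedUnder_ge_of_eventually_le _ (mu_le_one P hstoch μ hμ z)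
  exact lt_of_lt_of_le hKpos (le_liminf_of_le hbdd hKle)

lemma not_stable_of_gamma_ne [Nonempty Ω]
    (hstoch : ∀ ε ≥ (0 : ℝ), (∀ x y, 0 ≤ P ε x y) ∧ (∀ x, ∑ y, P ε x y = 1))
    (hirr : ∀ ε > (0 : ℝ), ∀ x y : Ω, ∃ n : ℕ, 0 < ((P ε) ^ n) x y)
    (hreg : ∀ x y : Ω, (∀ ε > (0 : ℝ), 0 < P ε x y) ∨ (∀ ε > (0 : ℝ), P ε x y = 0))
    (hlim : ∀ x y : Ω, Tendsto (fun ε => P ε x y) (nhdsWithin 0 (Set.Ioi 0)) (nhds (P 0 x y)))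
    (hres0 : ∀ x y : Ω, 0 < P 0 x y → res x y = 0)
    (hresTheta : ∀ x y : Ω, P 0 x y = 0 → (∀ ε > (0 : ℝ), 0 < P ε x y) →
      0 < res x y ∧ ∃ c C : ℝ, 0 < c ∧ 0 < C ∧
        ∀ᶠ ε in nhdsWithin (0 : ℝ) (Set.Ioi 0),
          c * ε ^ res x y ≤ P ε x y ∧ P ε x y ≤ C * ε ^ res x y)
    (hμ : ∀ ε > (0 : ℝ), (∀ x, 0 ≤ μ ε x) ∧ (∑ x, μ ε x = 1) ∧
      (∀ y, ∑ x, μ ε x * P ε x y = μ ε y))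
    {z : Ω}
    (hγ : gamma P res z ≠ gammaStar P res) :
    ¬ 0 < liminf (fun ε => μ ε z) (nhdsWithin (0:ℝ) (Set.Ioi 0)) := by
  intro hL
  set L := liminf (fun ε => μ ε z) (nhdsWithin (0:ℝ) (Set.Ioi 0)) with hLdef
  have hγlt : gammaStar P res < gamma P res z :=
    lt_of_le_of_ne (gammaStar_le P res z) (Ne.symm hγ)
  obtain ⟨y₀, hy₀⟩ := gammaStar_mem P res
  obtain ⟨cz, Cz, hcz, hCz, hevz⟩ := W_theta P res hstoch hirr hreg hlim hres0 hresTheta z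
  obtain ⟨cy, Cy, hcy, hCy, hevy⟩ := W_theta P res hstoch hirr hreg hlim hres0 hresTheta y₀
  set d := gamma P res z - gammaStar P res with hd
  have hdpos : 0 < d := by rw [hd]; linarith
  have hg : Tendsto (fun ε : ℝ => Cz / cy * ε ^ d)
      (nhdsWithin (0:ℝ) (Set.Ioi 0)) (nhds 0) := by
    have := (rpow_tendsto hdpos).const_mul (Cz / cy)
    simpa using this
  have hub : ∀ᶠ ε in nhdsWithin (0:ℝ) (Set.Ioi 0), μ ε z ≤ Cz / cy * ε ^ d := by
    filter_upwards [hevz, hevy, eventually_mem_nhdsWithin] with ε hz' hy' (hε : ε ∈ Set.Ioi 0)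
    have hεpos : (0:ℝ) < ε := hε
    set S := ∑ y, Wgt (P ε) y with hS
    have hdenpos : 0 < cy * ε ^ gammaStar P res :=
      mul_pos hcy (Real.rpow_pos_of_pos hεpos _)
    have hden : cy * ε ^ gammaStar P res ≤ S := by
      calc cy * ε ^ gammaStar P res = cy * ε ^ gamma P res y₀ := by rw [hy₀]
        _ ≤ Wgt (P ε) y₀ := hy'.1
        _ ≤ S := Finset.single_le_sum (fun y _ => le_of_lt (Wgt_pos P hεpos hstoch hirr hreg y)) (mem_univ y₀)
    have hnum : Wgt (P ε) z ≤ Cz * ε ^ gamma P res z := hz'.2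
    rw [mu_eq P hstoch hirr hreg μ hμ hεpos z, ← hS]
    calc Wgt (P ε) z / S ≤ Cz * ε ^ gamma P res z / (cy * ε ^ gammaStar P res) :=
          div_le_div₀ (le_of_lt (mul_pos hCz (Real.rpow_pos_of_pos hεpos _))) hnum hdenpos hden
      _ = Cz / cy * ε ^ d := by
          rw [hd, Real.rpow_sub hεpos, div_mul_div_comm]
  have hfreq : ∃ᶠ ε in nhdsWithin (0:ℝ) (Set.Ioi 0), μ ε z ≤ L / 2 := by
    have hsmall : ∀ᶠ ε in nhdsWithin (0:ℝ) (Set.Ioi 0), Cz / cy * ε ^ d < L / 2 :=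
      hg.eventually (eventually_lt_nhds (by linarith))
    refine Filter.Eventually.frequently ?_
    filter_upwards [hub, hsmall] with ε h1 h2
    linarith
  have hbdd : IsBoundedUnder (· ≥ ·) (nhdsWithin (0:ℝ) (Set.Ioi 0)) (fun ε => μ ε z) :=
    ⟨0, eventually_map.2 (mu_nonneg P μ hμ z)⟩
  have := liminf_le_of_frequently_le hfreq hbdd
  rw [← hLdef] at this
  linarith

end Hyps2

/-- **Young's characterization.** For a regular perturbed Markov process
`(P^ε)_{ε ≥ 0}` on a finite set `Ω` with stationary distributions `μ^ε`, a state `z` is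
stochastically stable iff some tree rooted at `z` has minimal resistance among all
rooted trees (over all possible roots). -/
theorem stochastically_stable_iff_min_resistance_tree
    [Nonempty Ω]
    (P : ℝ → Matrix Ω Ω ℝ) (res : Ω → Ω → ℝ)
    -- each `P ε` (ε ≥ 0) is a Markov transition matrix
    (hstoch : ∀ ε ≥ (0 : ℝ), (∀ x y, 0 ≤ P ε x y) ∧ (∀ x, ∑ y, P ε x y = 1))
    -- for `ε > 0`, `P ε` is irreducible
    (hirr : ∀ ε > (0 : ℝ), ∀ x y : Ω, ∃ n : ℕ, 0 < ((P ε) ^ n) x y)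
    -- ... and aperiodic
    (haper : ∀ ε > (0 : ℝ), ∀ x : Ω, ∃ m : ℕ, ∀ n ≥ m, 0 < ((P ε) ^ n) x x)
    -- `P ε → P 0` entrywise as `ε → 0⁺`
    (hlim : ∀ x y : Ω, Tendsto (fun ε => P ε x y) (nhdsWithin 0 (Set.Ioi 0)) (nhds (P 0 x y)))
    -- regularity: each transition is either possible for all `ε > 0` or forbidden for all
    (hreg : ∀ x y : Ω, (∀ ε > (0 : ℝ), 0 < P ε x y) ∨ (∀ ε > (0 : ℝ), P ε x y = 0))
    -- transitions possible in the unperturbed chain have resistance `0`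
    (hres0 : ∀ x y : Ω, 0 < P 0 x y → res x y = 0)
    -- non-forbidden transitions with `P⁰_{xy} = 0` have positive resistance `res x y`
    -- and satisfy `P^ε_{xy} = Θ(ε^{res x y})` as `ε → 0⁺`
    (hresTheta : ∀ x y : Ω, P 0 x y = 0 → (∀ ε > (0 : ℝ), 0 < P ε x y) →
      0 < res x y ∧ ∃ c C : ℝ, 0 < c ∧ 0 < C ∧
        ∀ᶠ ε in nhdsWithin (0 : ℝ) (Set.Ioi 0),
          c * ε ^ res x y ≤ P ε x y ∧ P ε x y ≤ C * ε ^ res x y)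
    -- `μ ε` is the (unique) stationary distribution of `P ε` for `ε > 0`
    (μ : ℝ → Ω → ℝ)
    (hμ : ∀ ε > (0 : ℝ), (∀ x, 0 ≤ μ ε x) ∧ (∑ x, μ ε x = 1) ∧
      (∀ y, ∑ x, μ ε x * P ε x y = μ ε y))
    (z : Ω) :
    0 < liminf (fun ε => μ ε z) (nhdsWithin (0 : ℝ) (Set.Ioi 0)) ↔
      ∃ T : Finset (Ω × Ω), IsRootedTree P T z ∧
        ∀ (z' : Ω) (T' : Finset (Ω × Ω)), IsRootedTree P T' z' →
          treeRes res T ≤ treeRes res T' := by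
  have hAE : ∀ {x y : Ω}, Allowed P x y → AllowedE P x y :=
    fun h => allowedE_of_allowed P hreg h
  have hresnnT : ∀ (T : Finset (Ω × Ω)), (∀ p ∈ T, Allowed P p.1 p.2) →
      ∀ p ∈ T, 0 ≤ res p.1 p.2 :=
    fun T hT p hp => res_nonneg P res hstoch hres0 hresTheta (hAE (hT p hp))
  constructor
  · intro hstable
    have hγ : gamma P res z = gammaStar P res := by
      by_contra h
      exact not_stable_of_gamma_ne P res μ hstoch hirr hreg hlim hres0 hresTheta hμ h hstable
    obtain ⟨f₀, hf₀g, hf₀val⟩ :=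
      gamma_mem P res (goodArbos_nonempty P hstoch hirr hreg z)
    have hf₀arb : IsArbo f₀ z := (Finset.mem_filter.1 hf₀g).2.1
    have hf₀all : ∀ v, v ≠ z → Allowed P v (f₀ v) := fun v hv =>
      allowed_of_allowedE P ((Finset.mem_filter.1 hf₀g).2.2 v hv)
    obtain ⟨hT₀, hT₀res⟩ := arbo_to_tree P res hf₀arb hf₀all
    refine ⟨arboEdges f₀ z, hT₀, ?_⟩
    intro z' T' hT'
    obtain ⟨f', hf'arb, hf'edges, hf'le⟩ :=
      tree_to_arbo P res hT' (hresnnT T' hT'.1)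
    have hf'good : f' ∈ goodArbos P z' :=
      Finset.mem_filter.2 ⟨mem_univ _, hf'arb, fun v hv => hAE (hT'.1 _ (hf'edges v hv))⟩
    calc treeRes res (arboEdges f₀ z)
        = aRes res z f₀ := hT₀res
      _ = gamma P res z := hf₀val
      _ = gammaStar P res := hγ
      _ ≤ gamma P res z' := gammaStar_le P res z'
      _ ≤ aRes res z' f' := gamma_le P res hf'good
      _ ≤ treeRes res T' := hf'le
  · rintro ⟨T, hT, hmin⟩
    have h1 : gamma P res z ≤ treeRes res T := by
      obtain ⟨f', hf'arb, hf'edges, hf'le⟩ := tree_to_arbo P res hT (hresnnT T hT.1)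
      have hf'good : f' ∈ goodArbos P z :=
        Finset.mem_filter.2 ⟨mem_univ _, hf'arb, fun v hv => hAE (hT.1 _ (hf'edges v hv))⟩
      exact le_trans (gamma_le P res hf'good) hf'le
    have h2 : treeRes res T ≤ gammaStar P res := by
      obtain ⟨y₀, hy₀⟩ := gammaStar_mem P res
      obtain ⟨f₀, hf₀g, hf₀val⟩ :=
        gamma_mem P res (goodArbos_nonempty P hstoch hirr hreg y₀)
      have hf₀arb : IsArbo f₀ y₀ := (Finset.mem_filter.1 hf₀g).2.1
      have hf₀all : ∀ v, v ≠ y₀ → Allowed P v (f₀ v) := fun v hv =>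
        allowed_of_allowedE P ((Finset.mem_filter.1 hf₀g).2.2 v hv)
      obtain ⟨hT₀, hT₀res⟩ := arbo_to_tree P res hf₀arb hf₀all
      calc treeRes res T ≤ treeRes res (arboEdges f₀ y₀) := hmin y₀ _ hT₀
        _ = aRes res y₀ f₀ := hT₀res
        _ = gamma P res y₀ := hf₀val
        _ = gammaStar P res := hy₀
    have hγ : gamma P res z = gammaStar P res :=
      le_antisymm (le_trans h1 h2) (gammaStar_le P res z)
    exact stable_of_gamma_eq P res μ hstoch hirr hreg hlim hres0 hresTheta hμ hγ

end Young
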